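/- If for every pair of complete (φ, (x, w̄ₙ), k)-conjunctions Ψ, Ψ' with Ψ' ⊨ Ψ it is not the case that both Ψ ∧ φ and Ψ' ∧ ¬φ are satisfiable, then φ(x, w̄ₙ) is logically equivalent to a finite disjunction of complete (φ, (x, w̄ₙ), k)-conjunctions, and hence to a standard x-translation of an intuitionistic formula. -/

import Mathlib

namespace IPC

/-- The classical vocabulary Σ: binary R, binary E, and for each intuitionistic
`n`-ary predicate letter indexed by `m` a classical `(n+1)`-ary letter `P n m`. -/
inductive Sym : Type
  | R : Sym
  | E : Sym
  | P : ℕ → ℕ → Sym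
  deriving DecidableEq

def Sym.arity : Sym → ℕ
  | .R => 2
  | .E => 2
  | .P n _ => n + 1

theorem Sym.arity_pos (s : Sym) : 0 < s.arity := by
  cases s <;> simp [Sym.arity]

/-- A first-order model for the vocabulary Σ. -/
structure Model : Type 1 where
  D : Type
  ne : Nonempty D
  rel : ∀ s : Sym, (Fin s.arity → D) → Prop

/-- First-order formulas (with identity) over Σ; variables are natural numbers. -/
inductive Fml : Type
  | atom (s : Sym) (args : Fin s.arity → ℕ)
  | eq (v w : ℕ)
  | fls
  | neg (φ : Fml)
  | conj (φ ψ : Fml)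
  | disj (φ ψ : Fml)
  | impl (φ ψ : Fml)
  | all (v : ℕ) (φ : Fml)
  | ex (v : ℕ) (φ : Fml)

/-- Tarskian satisfaction relative to a variable assignment. -/
def Fml.eval (M : Model) : Fml → (ℕ → M.D) → Prop
  | .atom s args, f => M.rel s (fun i => f (args i))
  | .eq v w, f => f v = f w
  | .fls, _ => False
  | .neg φ, f => ¬ φ.eval M f
  | .conj φ ψ, f => φ.eval M f ∧ ψ.eval M f
  | .disj φ ψ, f => φ.eval M f ∨ ψ.eval M f
  | .impl φ ψ, f => φ.eval M f → ψ.eval M f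
  | .all v φ, f => ∀ d : M.D, φ.eval M (Function.update f v d)
  | .ex v φ, f => ∃ d : M.D, φ.eval M (Function.update f v d)

/-- Degree: maximal nesting of quantifiers. -/
def Fml.deg : Fml → ℕ
  | .atom _ _ => 0
  | .eq _ _ => 0
  | .fls => 0
  | .neg φ => φ.deg
  | .conj φ ψ => max φ.deg ψ.deg
  | .disj φ ψ => max φ.deg ψ.deg
  | .impl φ ψ => max φ.deg ψ.deg
  | .all _ φ => φ.deg + 1
  | .ex _ φ => φ.deg + 1

/-- Free variables. -/
def Fml.free : Fml → Finset ℕ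
  | .atom _ args => Finset.univ.image args
  | .eq v w => {v, w}
  | .fls => ∅
  | .neg φ => φ.free
  | .conj φ ψ => φ.free ∪ ψ.free
  | .disj φ ψ => φ.free ∪ ψ.free
  | .impl φ ψ => φ.free ∪ ψ.free
  | .all v φ => φ.free.erase v
  | .ex v φ => φ.free.erase v

/-- All variables occurring (free or bound). -/
def Fml.vars : Fml → Finset ℕ
  | .atom _ args => Finset.univ.image args
  | .eq v w => {v, w}
  | .fls => ∅
  | .neg φ => φ.vars
  | .conj φ ψ => φ.vars ∪ ψ.vars
  | .disj φ ψ => φ.vars ∪ ψ.vars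
  | .impl φ ψ => φ.vars ∪ ψ.vars
  | .all v φ => insert v φ.vars
  | .ex v φ => insert v φ.vars

/-- Predicate symbols occurring in a formula. -/
def Fml.syms : Fml → Finset Sym
  | .atom s _ => {s}
  | .eq _ _ => ∅
  | .fls => ∅
  | .neg φ => φ.syms
  | .conj φ ψ => φ.syms ∪ ψ.syms
  | .disj φ ψ => φ.syms ∪ ψ.syms
  | .impl φ ψ => φ.syms ∪ ψ.syms
  | .all _ φ => φ.syms
  | .ex _ φ => φ.syms

/-- Σ_φ : the symbols of φ together with R and E. -/
def sigOf (φ : Fml) : Finset Sym := φ.syms ∪ {Sym.R, Sym.E}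

/-- Logical equivalence. -/
def FmlEquiv (φ ψ : Fml) : Prop :=
  ∀ (M : Model) (f : ℕ → M.D), φ.eval M f ↔ ψ.eval M f

/-- Logical consequence between single formulas. -/
def EntailsF (φ ψ : Fml) : Prop :=
  ∀ (M : Model) (f : ℕ → M.D), φ.eval M f → ψ.eval M f

/-- Logical consequence from a set of formulas. -/
def EntailsSet (Γ : Set Fml) (φ : Fml) : Prop :=
  ∀ (M : Model) (f : ℕ → M.D), (∀ ψ ∈ Γ, ψ.eval M f) → φ.eval M f

def Satisfiable (φ : Fml) : Prop := ∃ (M : Model) (f : ℕ → M.D), φ.eval M f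

/-- Intuitionistic predicate formulas (without identity); an `n`-ary letter
indexed by `m` takes `n` object variables. -/
inductive IFml : Type
  | atom (n m : ℕ) (args : Fin n → ℕ)
  | fls
  | conj (i j : IFml)
  | disj (i j : IFml)
  | impl (i j : IFml)
  | all (v : ℕ) (i : IFml)
  | ex (v : ℕ) (i : IFml)

/-- Standard x-translation.  Object variables `v` of intuitionistic formulas are
represented as the even classical variables `2*v`; world variables are odd, and
a fresh world variable for a binder under world variable `x` is `x+2`. -/
def ST : IFml → ℕ → Fml
  | .atom n m args, x => .atom (.P n m) (Fin.cons x (fun i => 2 * args i))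
  | .fls, x => .neg (.eq x x)
  | .conj i j, x => .conj (ST i x) (ST j x)
  | .disj i j, x => .disj (ST i x) (ST j x)
  | .impl i j, x =>
      .all (x + 2) (.impl (.atom .R ![x, x + 2]) (.impl (ST i (x + 2)) (ST j (x + 2))))
  | .ex w i, x => .ex (2 * w) (.conj (.atom .E ![x, 2 * w]) (ST i x))
  | .all w i, x =>
      .all (x + 2) (.all (2 * w)
        (.impl (.conj (.atom .R ![x, x + 2]) (.atom .E ![x + 2, 2 * w])) (ST i (x + 2))))

/-- `ψ` is a standard x-translation (with x the fixed variable 1). -/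
def IsSTF (ψ : Fml) : Prop := ∃ i : IFml, ψ = ST i 1

/-- Truth of `φ(x, w̄ₙ)` at the n-ary evaluation point `(M, a, b̄ₙ)`:
true under every assignment sending `x` (variable 1) to `a` and `wᵢ`
(variable `2*i`) to `bᵢ`. -/
def Sat (M : Model) (a : M.D) (bs : List M.D) (φ : Fml) : Prop :=
  ∀ f : ℕ → M.D, f 1 = a → (∀ i : Fin bs.length, f (2 * i.val) = bs.get i) → φ.eval M f

/-- Free variables of φ are among x, w₁, …, wₙ. -/
def FreeOK (n : ℕ) (φ : Fml) : Prop :=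
  ∀ v ∈ φ.free, v = 1 ∨ ∃ i < n, v = 2 * i

def relR (α : Model) (a b : α.D) : Prop := α.rel .R ![a, b]
def relE (α : Model) (a b : α.D) : Prop := α.rel .E ![a, b]

/-- Truth of the atom `P(x, w̄_l)` at `(α, a, ō_l)`. -/
def atomSat (α : Model) (P : Sym) (a : α.D) (os : List α.D) : Prop :=
  ∃ h : P.arity = os.length + 1, α.rel P (fun i => (a :: os).get (Fin.cast h i))

/-- The model named by a side: `true ↦ M`, `false ↦ N`. -/
def side (M N : Model) : Bool → Model
  | true => M
  | false => N

/-- `⟨(M,a,b̄ₙ),(N,c,d̄ₙ)⟩_k`-asimulation conditions (without the condition on the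
distinguished points).  The relation `A` relates tuples `(w̄_m, a'; ō_l)` over one
of the two models to similar tuples over one of the two models. -/
structure IsKAsim (Θ : Set Sym) (M N : Model) (n k : ℕ)
    (A : ∀ s t : Bool, List (side M N s).D → (side M N s).D → List (side M N s).D →
          List (side M N t).D → (side M N t).D → List (side M N t).D → Prop) : Prop where
  lengths : ∀ s t ws a' os ws' c' os', A s t ws a' os ws' c' os' →
      ws.length = ws'.length ∧ os.length = os'.length
  atoms : ∀ s t ws a' os ws' c' os', A s t ws a' os ws' c' os' →
      ∀ P ∈ Θ, P ≠ Sym.R → P ≠ Sym.E →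
        atomSat (side M N s) P a' os → atomSat (side M N t) P c' os'
  back : ∀ s t ws a' os ws' c' os', A s t ws a' os ws' c' os' →
      ws.length + os.length < n + k →
      ∀ c'', relR (side M N t) c' c'' →
        ∃ a'', relR (side M N s) a' a'' ∧
          A t s (ws' ++ [c']) c'' os' (ws ++ [a']) a'' os ∧
          A s t (ws ++ [a']) a'' os (ws' ++ [c']) c'' os'
  exi : ∀ s t ws a' os ws' c' os', A s t ws a' os ws' c' os' →
      ws.length + os.length < n + k →
      ∀ b'', relE (side M N s) a' b'' →
        ∃ d'', relE (side M N t) c' d'' ∧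
          A s t ws a' (os ++ [b'']) ws' c' (os' ++ [d''])
  uni : ∀ s t ws a' os ws' c' os', A s t ws a' os ws' c' os' →
      ws.length + os.length + 1 < n + k →
      ∀ c'' d'', relR (side M N t) c' c'' → relE (side M N t) c'' d'' →
        ∃ a'' b'', relR (side M N s) a' a'' ∧ relE (side M N s) a'' b'' ∧
          A s t (ws ++ [a']) a'' (os ++ [b'']) (ws' ++ [c']) c'' (os' ++ [d''])

/-- (Unparametrized) asimulation conditions. -/
structure IsAsim (Θ : Set Sym) (M N : Model)
    (A : ∀ s t : Bool, (side M N s).D → List (side M N s).D →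
          (side M N t).D → List (side M N t).D → Prop) : Prop where
  lengths : ∀ s t a' os c' os', A s t a' os c' os' → os.length = os'.length
  atoms : ∀ s t a' os c' os', A s t a' os c' os' →
      ∀ P ∈ Θ, P ≠ Sym.R → P ≠ Sym.E →
        atomSat (side M N s) P a' os → atomSat (side M N t) P c' os'
  back : ∀ s t a' os c' os', A s t a' os c' os' →
      ∀ c'', relR (side M N t) c' c'' →
        ∃ a'', relR (side M N s) a' a'' ∧ A t s c'' os' a'' os ∧ A s t a'' os c'' os'
  exi : ∀ s t a' os c' os', A s t a' os c' os' →
      ∀ b'', relE (side M N s) a' b'' →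
        ∃ d'', relE (side M N t) c' d'' ∧ A s t a' (os ++ [b'']) c' (os' ++ [d''])
  uni : ∀ s t a' os c' os', A s t a' os c' os' →
      ∀ c'' d'', relR (side M N t) c' c'' → relE (side M N t) c'' d'' →
        ∃ a'' b'', relR (side M N s) a' a'' ∧ relE (side M N s) a'' b'' ∧
          A s t a'' (os ++ [b'']) c'' (os' ++ [d''])

/-- Invariance with respect to k-asimulations (for formulas `φ(x, w̄ₙ)`). -/
def KInvariant (φ : Fml) (n k : ℕ) : Prop :=
  ∀ (Θ : Set Sym), ↑(sigOf φ) ⊆ Θ →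
    ∀ (M N : Model) (a : M.D) (bs : List M.D) (c : N.D) (ds : List N.D),
      bs.length = n → ds.length = n →
      (∃ A, IsKAsim Θ M N n k A ∧ A true false [] a bs [] c ds) →
      Sat M a bs φ → Sat N c ds φ

/-- Invariance with respect to asimulations. -/
def AsimInvariant (φ : Fml) (n : ℕ) : Prop :=
  ∀ (Θ : Set Sym), ↑(sigOf φ) ⊆ Θ →
    ∀ (M N : Model) (a : M.D) (bs : List M.D) (c : N.D) (ds : List N.D),
      bs.length = n → ds.length = n →
      (∃ A, IsAsim Θ M N A ∧ A true false a bs c ds) →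
      Sat M a bs φ → Sat N c ds φ

def conjList : List Fml → Fml
  | [] => .neg .fls
  | φ :: l => .conj φ (conjList l)

def disjList : List Fml → Fml
  | [] => .fls
  | φ :: l => .disj φ (disjList l)

/-- A `(Σ_φ, (x, w̄ₙ), k)`-formula that is a standard x-translation. -/
def GoodFml (φ : Fml) (n k : ℕ) (ψ : Fml) : Prop :=
  ψ.syms ⊆ sigOf φ ∧ FreeOK n ψ ∧ ψ.deg ≤ k ∧ IsSTF ψ

/-- A complete `(φ, (x, w̄ₙ), k)`-conjunction, given by its list of conjuncts. -/
def CompleteConj (φ : Fml) (n k : ℕ) (L : List Fml) : Prop :=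
  (∀ ψ ∈ L, GoodFml φ n k ψ) ∧
  ∃ (M : Model) (a : M.D) (bs : List M.D), bs.length = n ∧
    Sat M a bs (conjList L) ∧ Sat M a bs φ ∧
    ∀ ψ : Fml, GoodFml φ n k ψ → Sat M a bs ψ → EntailsF (conjList L) ψ

/-- All Θ-formulas that are standard x-translations of intuitionistic formulas
true at `(α, a, ōₗ)` are true at `(β, c, d̄ₗ)`. -/
def ITLe (Θ : Set Sym) (α : Model) (a : α.D) (os : List α.D)
    (β : Model) (c : β.D) (ds : List β.D) : Prop :=
  ∀ i : IFml, ↑(ST i 1).syms ⊆ Θ → FreeOK os.length (ST i 1) →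
    Sat α a os (ST i 1) → Sat β c ds (ST i 1)

/-- ω-saturation: every type over finitely many parameters (the values of the
assignment `f` on the finite set `W`) in finitely many variables (`V`) that is
finitely satisfiable in `M` is realized in `M`. -/
def OmegaSaturated (M : Model) : Prop :=
  ∀ (f : ℕ → M.D) (V W : Finset ℕ) (Γ : Set Fml),
    (∀ ψ ∈ Γ, ↑ψ.free ⊆ (↑(V ∪ W) : Set ℕ)) →
    (∀ Γ' : Finset Fml, ↑Γ' ⊆ Γ →
      ∃ g : ℕ → M.D, (∀ v ∉ V, g v = f v) ∧ ∀ ψ ∈ Γ', ψ.eval M g) →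
    ∃ g : ℕ → M.D, (∀ v ∉ V, g v = f v) ∧ ∀ ψ ∈ Γ, ψ.eval M g

/-- The intuitionistic consequences of φ: Σ_φ-formulas in the variables
x, w̄ₙ that are standard x-translations and follow from φ. -/
def IC (φ : Fml) (n : ℕ) : Set Fml :=
  {ψ | ψ.syms ⊆ sigOf φ ∧ FreeOK n ψ ∧ IsSTF ψ ∧ EntailsF φ ψ}

/-! K-relative notions. -/

def KSatisfiable (K : Set Model) (Γ : Set Fml) : Prop :=
  ∃ M ∈ K, ∃ f : ℕ → M.D, ∀ ψ ∈ Γ, ψ.eval M f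

def KEntails (K : Set Model) (φ ψ : Fml) : Prop := ¬ KSatisfiable K {φ, ψ.neg}

def KEquiv (K : Set Model) (φ ψ : Fml) : Prop := KEntails K φ ψ ∧ KEntails K ψ φ

def KAsimInvariant (K : Set Model) (φ : Fml) (n : ℕ) : Prop :=
  ∀ (Θ : Set Sym), ↑(sigOf φ) ⊆ Θ →
    ∀ (M N : Model), M ∈ K → N ∈ K →
      ∀ (a : M.D) (bs : List M.D) (c : N.D) (ds : List N.D),
        bs.length = n → ds.length = n →
        (∃ A, IsAsim Θ M N A ∧ A true false a bs c ds) →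
        Sat M a bs φ → Sat N c ds φ

end IPC

namespace IPC

noncomputable instance : DecidableEq IFml := Classical.decEq _

/-! Intuitionistic-side measures. -/

def ideg : IFml → ℕ
  | .atom _ _ _ => 0
  | .fls => 0
  | .conj i j => max (ideg i) (ideg j)
  | .disj i j => max (ideg i) (ideg j)
  | .impl i j => max (ideg i) (ideg j) + 1
  | .ex _ i => ideg i + 1
  | .all _ i => ideg i + 2

def isyms : IFml → Finset Sym
  | .atom n m _ => {Sym.P n m}
  | .fls => ∅
  | .conj i j => isyms i ∪ isyms j
  | .disj i j => isyms i ∪ isyms j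
  | .impl i j => {Sym.R} ∪ (isyms i ∪ isyms j)
  | .ex _ i => {Sym.E} ∪ isyms i
  | .all _ i => ({Sym.R} ∪ {Sym.E}) ∪ isyms i

def ifree : IFml → Finset ℕ
  | .atom _ _ args => Finset.univ.image args
  | .fls => ∅
  | .conj i j => ifree i ∪ ifree j
  | .disj i j => ifree i ∪ ifree j
  | .impl i j => ifree i ∪ ifree j
  | .ex v i => (ifree i).erase v
  | .all v i => (ifree i).erase v

theorem deg_ST (i : IFml) : ∀ x, (ST i x).deg = ideg i := by
  induction i <;> intro x <;> simp [ST, Fml.deg, ideg, *] <;> omega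

theorem syms_ST (i : IFml) : ∀ x, (ST i x).syms = isyms i := by
  induction i <;> intro x <;> simp [ST, Fml.syms, isyms, *]

theorem free_ST_subset (i : IFml) : ∀ x, x % 2 = 1 →
    (ST i x).free ⊆ insert x ((ifree i).image (fun v => 2 * v)) := by
  induction i with
  | atom n m args =>
      intro x hx v hv
      simp only [ST, Fml.free, Finset.mem_image, Finset.mem_univ, true_and] at hv
      obtain ⟨j, -, hj⟩ := Finset.mem_image.1 hv
      simp only [Finset.mem_insert, Finset.mem_image, ifree, Finset.mem_univ, true_and]
      revert hj
      refine Fin.cases ?_ ?_ j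
      · intro hj; left; exact hj.symm
      · intro jj hj
        right
        refine ⟨args jj, ⟨jj, rfl⟩, hj⟩
  | fls => intro x hx v hv; simp [Fml.free, ST] at hv; simp [hv]
  | conj i j ihi ihj =>
      intro x hx v hv
      simp only [ST, Fml.free, Finset.mem_union] at hv
      rcases hv with hv | hv
      · rcases Finset.mem_insert.1 (ihi x hx hv) with h | h
        · simp [h]
        · simp only [Finset.mem_image] at h ⊢
          obtain ⟨u, hu, rfl⟩ := h
          exact Finset.mem_insert_of_mem (Finset.mem_image.2 ⟨u, by simp [ifree, hu], rfl⟩)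
      · rcases Finset.mem_insert.1 (ihj x hx hv) with h | h
        · simp [h]
        · simp only [Finset.mem_image] at h ⊢
          obtain ⟨u, hu, rfl⟩ := h
          exact Finset.mem_insert_of_mem (Finset.mem_image.2 ⟨u, by simp [ifree, hu], rfl⟩)
  | disj i j ihi ihj =>
      intro x hx v hv
      simp only [ST, Fml.free, Finset.mem_union] at hv
      rcases hv with hv | hv
      · rcases Finset.mem_insert.1 (ihi x hx hv) with h | h
        · simp [h]
        · simp only [Finset.mem_image] at h ⊢
          obtain ⟨u, hu, rfl⟩ := h
          exact Finset.mem_insert_of_mem (Finset.mem_image.2 ⟨u, by simp [ifree, hu], rfl⟩)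
      · rcases Finset.mem_insert.1 (ihj x hx hv) with h | h
        · simp [h]
        · simp only [Finset.mem_image] at h ⊢
          obtain ⟨u, hu, rfl⟩ := h
          exact Finset.mem_insert_of_mem (Finset.mem_image.2 ⟨u, by simp [ifree, hu], rfl⟩)
  | impl i j ihi ihj =>
      intro x hx v hv
      simp only [ST, Fml.free, Finset.mem_erase, Finset.mem_union] at hv
      obtain ⟨hne, hv⟩ := hv
      rcases hv with hv | hv | hv
      · -- v ∈ free of atom R ![x, x+2]
        obtain ⟨jj, -, hj⟩ := Finset.mem_image.1 hv
        have : v = x ∨ v = x + 2 := by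
          revert hj; refine Fin.cases ?_ ?_ jj <;> intros <;> simp_all
        rcases this with rfl | rfl
        · simp
        · exact absurd rfl hne
      · rcases Finset.mem_insert.1 (ihi (x+2) (by omega) hv) with h | h
        · exact absurd h hne
        · simp only [Finset.mem_image] at h ⊢
          obtain ⟨u, hu, rfl⟩ := h
          exact Finset.mem_insert_of_mem (Finset.mem_image.2 ⟨u, by simp [ifree, hu], rfl⟩)
      · rcases Finset.mem_insert.1 (ihj (x+2) (by omega) hv) with h | h
        · exact absurd h hne
        · simp only [Finset.mem_image] at h ⊢
          obtain ⟨u, hu, rfl⟩ := h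
          exact Finset.mem_insert_of_mem (Finset.mem_image.2 ⟨u, by simp [ifree, hu], rfl⟩)
  | all w i ihi =>
      intro x hx v hv
      simp only [ST, Fml.free, Finset.mem_erase, Finset.mem_union] at hv
      obtain ⟨hne2, hnw, hv⟩ := hv
      rcases hv with (hv | hv) | hv
      · obtain ⟨jj, -, hj⟩ := Finset.mem_image.1 hv
        have : v = x ∨ v = x + 2 := by
          revert hj; refine Fin.cases ?_ ?_ jj <;> intros <;> simp_all
        rcases this with rfl | rfl
        · simp
        · exact absurd rfl hne2
      · obtain ⟨jj, -, hj⟩ := Finset.mem_image.1 hv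
        have : v = x + 2 ∨ v = 2 * w := by
          revert hj; refine Fin.cases ?_ ?_ jj <;> intros <;> simp_all
        rcases this with rfl | rfl
        · exact absurd rfl hne2
        · exact absurd rfl hnw
      · rcases Finset.mem_insert.1 (ihi (x+2) (by omega) hv) with h | h
        · exact absurd h hne2
        · simp only [Finset.mem_image] at h ⊢
          obtain ⟨u, hu, rfl⟩ := h
          refine Finset.mem_insert_of_mem (Finset.mem_image.2 ⟨u, ?_, rfl⟩)
          simp only [ifree, Finset.mem_erase]
          exact ⟨fun huw => hnw (by rw [huw]), hu⟩
  | ex w i ihi =>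
      intro x hx v hv
      simp only [ST, Fml.free, Finset.mem_erase, Finset.mem_union] at hv
      obtain ⟨hnw, hv⟩ := hv
      rcases hv with hv | hv
      · obtain ⟨jj, -, hj⟩ := Finset.mem_image.1 hv
        have : v = x ∨ v = 2 * w := by
          revert hj; refine Fin.cases ?_ ?_ jj <;> intros <;> simp_all
        rcases this with rfl | rfl
        · simp
        · exact absurd rfl hnw
      · rcases Finset.mem_insert.1 (ihi x hx hv) with h | h
        · simp [h]
        · simp only [Finset.mem_image] at h ⊢
          obtain ⟨u, hu, rfl⟩ := h
          refine Finset.mem_insert_of_mem (Finset.mem_image.2 ⟨u, ?_, rfl⟩)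
          simp only [ifree, Finset.mem_erase]
          exact ⟨fun huw => hnw (by rw [huw]), hu⟩

theorem mem_free_ST (i : IFml) : ∀ x, x % 2 = 1 → ∀ v ∈ ifree i, 2 * v ∈ (ST i x).free := by
  induction i with
  | atom n m args =>
      intro x hx v hv
      simp only [ifree, Finset.mem_image, Finset.mem_univ, true_and] at hv
      obtain ⟨j, rfl⟩ := hv
      simp only [ST, Fml.free, Finset.mem_image, Finset.mem_univ, true_and]
      exact Finset.mem_image.2 ⟨j.succ, Finset.mem_univ _, rfl⟩
  | fls => intro x hx v hv; simp [ifree] at hv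
  | conj i j ihi ihj =>
      intro x hx v hv
      simp only [ifree, Finset.mem_union] at hv
      simp only [ST, Fml.free, Finset.mem_union]
      rcases hv with hv | hv
      · exact Or.inl (ihi x hx v hv)
      · exact Or.inr (ihj x hx v hv)
  | disj i j ihi ihj =>
      intro x hx v hv
      simp only [ifree, Finset.mem_union] at hv
      simp only [ST, Fml.free, Finset.mem_union]
      rcases hv with hv | hv
      · exact Or.inl (ihi x hx v hv)
      · exact Or.inr (ihj x hx v hv)
  | impl i j ihi ihj =>
      intro x hx v hv
      simp only [ifree, Finset.mem_union] at hv
      simp only [ST, Fml.free, Finset.mem_erase, Finset.mem_union]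
      refine ⟨by omega, Or.inr ?_⟩
      rcases hv with hv | hv
      · exact Or.inl (ihi (x+2) (by omega) v hv)
      · exact Or.inr (ihj (x+2) (by omega) v hv)
  | all w i ihi =>
      intro x hx v hv
      simp only [ifree, Finset.mem_erase] at hv
      simp only [ST, Fml.free, Finset.mem_erase, Finset.mem_union]
      exact ⟨by omega, by omega, Or.inr (ihi (x+2) (by omega) v hv.2)⟩
  | ex w i ihi =>
      intro x hx v hv
      simp only [ifree, Finset.mem_erase] at hv
      simp only [ST, Fml.free, Finset.mem_erase, Finset.mem_union]
      exact ⟨by omega, Or.inr (ihi x hx v hv.2)⟩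

end IPC
namespace IPC

/-! Assignment congruence for evaluation. -/

theorem eval_congr (M : Model) : ∀ (ψ : Fml) (f g : ℕ → M.D),
    (∀ v ∈ ψ.free, f v = g v) → (ψ.eval M f ↔ ψ.eval M g) := by
  intro ψ
  induction ψ with
  | atom s args =>
      intro f g hfg
      simp only [Fml.eval]
      have : (fun i => f (args i)) = fun i => g (args i) := by
        funext i
        exact hfg _ (by simp [Fml.free, Finset.mem_image])
      rw [this]
  | eq v w =>
      intro f g hfg
      simp only [Fml.eval]
      rw [hfg v (by simp [Fml.free]), hfg w (by simp [Fml.free])]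
  | fls => intro f g hfg; simp [Fml.eval]
  | neg φ ih =>
      intro f g hfg
      simp only [Fml.eval]
      rw [ih f g hfg]
  | conj φ ψ ih1 ih2 =>
      intro f g hfg
      simp only [Fml.eval]
      rw [ih1 f g (fun v hv => hfg v (by simp [Fml.free, hv])),
        ih2 f g (fun v hv => hfg v (by simp [Fml.free, hv]))]
  | disj φ ψ ih1 ih2 =>
      intro f g hfg
      simp only [Fml.eval]
      rw [ih1 f g (fun v hv => hfg v (by simp [Fml.free, hv])),
        ih2 f g (fun v hv => hfg v (by simp [Fml.free, hv]))]
  | impl φ ψ ih1 ih2 =>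
      intro f g hfg
      simp only [Fml.eval]
      rw [ih1 f g (fun v hv => hfg v (by simp [Fml.free, hv])),
        ih2 f g (fun v hv => hfg v (by simp [Fml.free, hv]))]
  | all v φ ih =>
      intro f g hfg
      simp only [Fml.eval]
      refine forall_congr' fun d => ih _ _ fun u hu => ?_
      by_cases huv : u = v
      · subst huv; simp
      · rw [Function.update_of_ne huv, Function.update_of_ne huv]
        exact hfg u (by simp [Fml.free, Finset.mem_erase, huv, hu])
  | ex v φ ih =>
      intro f g hfg
      simp only [Fml.eval]
      refine exists_congr fun d => ih _ _ fun u hu => ?_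
      by_cases huv : u = v
      · subst huv; simp
      · rw [Function.update_of_ne huv, Function.update_of_ne huv]
        exact hfg u (by simp [Fml.free, Finset.mem_erase, huv, hu])

/-! Intuitionistic conjunctions/disjunctions of lists. -/

def itop : IFml := .impl .fls .fls

def iconjGo : IFml → List IFml → IFml
  | c, [] => c
  | c, d :: l => .conj c (iconjGo d l)

def jconjL : List IFml → IFml
  | [] => itop
  | c :: l => iconjGo c l

def idisjGo : IFml → List IFml → IFml
  | c, [] => c
  | c, d :: l => .disj c (idisjGo d l)

def idisjL : List IFml → IFml
  | [] => .fls
  | c :: l => idisjGo c l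

noncomputable def reify (T : Finset (Finset IFml)) : IFml :=
  idisjL (T.toList.map (fun S => jconjL S.toList))

theorem eval_iconjGo (x : ℕ) (M : Model) (f : ℕ → M.D) :
    ∀ (l : List IFml) (c : IFml),
      (ST (iconjGo c l) x).eval M f ↔ ((ST c x).eval M f ∧ ∀ d ∈ l, (ST d x).eval M f) := by
  intro l
  induction l with
  | nil => intro c; simp [iconjGo]
  | cons d l ih =>
      intro c
      simp only [iconjGo, ST, Fml.eval, ih d, List.mem_cons]
      constructor
      · rintro ⟨h1, h2, h3⟩
        exact ⟨h1, fun e he => he.elim (fun h => h ▸ h2) (h3 e)⟩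
      · rintro ⟨h1, h2⟩
        exact ⟨h1, h2 d (Or.inl rfl), fun e he => h2 e (Or.inr he)⟩

theorem eval_jconjL (x : ℕ) (M : Model) (f : ℕ → M.D) :
    ∀ (l : List IFml),
      (ST (jconjL l) x).eval M f ↔ ∀ d ∈ l, (ST d x).eval M f := by
  intro l
  cases l with
  | nil =>
      simp only [jconjL, itop, ST, Fml.eval, List.not_mem_nil, false_implies, implies_true,
        iff_true]
      intro d _ hh
      exact hh
  | cons c l =>
      rw [jconjL, eval_iconjGo]
      simp [List.forall_mem_cons]

theorem eval_idisjGo (x : ℕ) (M : Model) (f : ℕ → M.D) :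
    ∀ (l : List IFml) (c : IFml),
      (ST (idisjGo c l) x).eval M f ↔ ((ST c x).eval M f ∨ ∃ d ∈ l, (ST d x).eval M f) := by
  intro l
  induction l with
  | nil => intro c; simp [idisjGo]
  | cons d l ih =>
      intro c
      simp only [idisjGo, ST, Fml.eval, ih d, List.mem_cons]
      constructor
      · rintro (h | h | ⟨e, he, hev⟩)
        · exact Or.inl h
        · exact Or.inr ⟨d, Or.inl rfl, h⟩
        · exact Or.inr ⟨e, Or.inr he, hev⟩
      · rintro (h | ⟨e, he | he, hev⟩)
        · exact Or.inl h
        · exact Or.inr (Or.inl (he ▸ hev))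
        · exact Or.inr (Or.inr ⟨e, he, hev⟩)

theorem eval_idisjL (x : ℕ) (M : Model) (f : ℕ → M.D) :
    ∀ (l : List IFml),
      (ST (idisjL l) x).eval M f ↔ ∃ d ∈ l, (ST d x).eval M f := by
  intro l
  cases l with
  | nil => simp [idisjL, ST, Fml.eval]
  | cons c l =>
      rw [idisjL, eval_idisjGo]
      simp

theorem eval_reify (T : Finset (Finset IFml)) (x : ℕ) (M : Model) (g : ℕ → M.D) :
    (ST (reify T) x).eval M g ↔ ∃ S ∈ T, ∀ c ∈ S, (ST c x).eval M g := by
  rw [reify, eval_idisjL]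
  constructor
  · rintro ⟨d, hd, hev⟩
    obtain ⟨S, hS, rfl⟩ := List.mem_map.1 hd
    rw [eval_jconjL] at hev
    exact ⟨S, Finset.mem_toList.1 hS, fun c hc => hev c (Finset.mem_toList.2 hc)⟩
  · rintro ⟨S, hS, hall⟩
    refine ⟨jconjL S.toList, List.mem_map.2 ⟨S, Finset.mem_toList.2 hS, rfl⟩, ?_⟩
    rw [eval_jconjL]
    exact fun c hc => hall c (Finset.mem_toList.1 hc)

/-- Closure of a property under the connective combinators. -/
theorem iconjGo_prop (Q : IFml → Prop) (hQ : ∀ a b, Q a → Q b → Q (.conj a b)) :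
    ∀ (l : List IFml) (c : IFml), Q c → (∀ d ∈ l, Q d) → Q (iconjGo c l) := by
  intro l
  induction l with
  | nil => intro c hc _; exact hc
  | cons d l ih =>
      intro c hc hl
      exact hQ _ _ hc (ih d (hl d (by simp)) (fun e he => hl e (by simp [he])))

theorem idisjGo_prop (Q : IFml → Prop) (hQ : ∀ a b, Q a → Q b → Q (.disj a b)) :
    ∀ (l : List IFml) (c : IFml), Q c → (∀ d ∈ l, Q d) → Q (idisjGo c l) := by
  intro l
  induction l with
  | nil => intro c hc _; exact hc
  | cons d l ih =>
      intro c hc hl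
      exact hQ _ _ hc (ih d (hl d (by simp)) (fun e he => hl e (by simp [he])))

/-! The finite sets of prime components and normal forms. -/

noncomputable def atomsF (Sg : Finset Sym) (V : ℕ) : Finset IFml :=
  Sg.biUnion fun s =>
    match s with
    | .P n' m => (Finset.univ : Finset (Fin n' → Fin V)).image
        (fun a => IFml.atom n' m fun j => (a j : ℕ))
    | _ => ∅

noncomputable def DNFof (C : Finset IFml) : Finset IFml :=
  ((C.powerset.erase ∅).powerset).image reify

noncomputable def PComp (Sg : Finset Sym) : ℕ → ℕ → Finset IFml
  | 0, V => atomsF Sg V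
  | 1, V =>
      atomsF Sg V ∪
        ((DNFof (PComp Sg 0 V) ×ˢ DNFof (PComp Sg 0 V)).image fun p => IFml.impl p.1 p.2) ∪
        ((DNFof (PComp Sg 0 (V+1))).image (IFml.ex V))
  | (k+2), V =>
      (atomsF Sg V ∪
        ((DNFof (PComp Sg (k+1) V) ×ˢ DNFof (PComp Sg (k+1) V)).image
          fun p => IFml.impl p.1 p.2) ∪
        ((DNFof (PComp Sg (k+1) (V+1))).image (IFml.ex V))) ∪
        ((DNFof (PComp Sg k (V+1))).image (IFml.all V))

theorem mem_atomsF {Sg : Finset Sym} {V n' m : ℕ} (hP : Sym.P n' m ∈ Sg)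
    (as : Fin n' → ℕ) (h : ∀ j, as j < V) : IFml.atom n' m as ∈ atomsF Sg V := by
  unfold atomsF
  refine Finset.mem_biUnion.2 ⟨Sym.P n' m, hP, ?_⟩
  refine Finset.mem_image.2 ⟨fun j => ⟨as j, h j⟩, Finset.mem_univ _, ?_⟩
  rfl

theorem atomsF_subset_PComp (Sg : Finset Sym) (k V : ℕ) : atomsF Sg V ⊆ PComp Sg k V := by
  match k with
  | 0 => rw [PComp]
  | 1 =>
      rw [PComp]
      exact (Finset.subset_union_left.trans Finset.subset_union_left)
  | (k+2) =>
      rw [PComp]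
      exact ((Finset.subset_union_left.trans Finset.subset_union_left).trans
        Finset.subset_union_left)

theorem impl_mem_PComp {Sg : Finset Sym} {k V : ℕ} {A B : IFml}
    (hA : A ∈ DNFof (PComp Sg k V)) (hB : B ∈ DNFof (PComp Sg k V)) :
    IFml.impl A B ∈ PComp Sg (k+1) V := by
  match k with
  | 0 =>
      rw [PComp]
      exact Finset.mem_union_left _ (Finset.mem_union_right _
        (Finset.mem_image.2 ⟨(A, B), Finset.mem_product.2 ⟨hA, hB⟩, rfl⟩))
  | (k+1) =>
      rw [PComp]
      exact Finset.mem_union_left _ (Finset.mem_union_left _ (Finset.mem_union_right _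
        (Finset.mem_image.2 ⟨(A, B), Finset.mem_product.2 ⟨hA, hB⟩, rfl⟩)))

theorem ex_mem_PComp {Sg : Finset Sym} {k V : ℕ} {A : IFml}
    (hA : A ∈ DNFof (PComp Sg k (V+1))) :
    IFml.ex V A ∈ PComp Sg (k+1) V := by
  match k with
  | 0 =>
      rw [PComp]
      exact Finset.mem_union_right _ (Finset.mem_image.2 ⟨A, hA, rfl⟩)
  | (k+1) =>
      rw [PComp]
      exact Finset.mem_union_left _
        (Finset.mem_union_right _ (Finset.mem_image.2 ⟨A, hA, rfl⟩))

theorem all_mem_PComp {Sg : Finset Sym} {k V : ℕ} {A : IFml}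
    (hA : A ∈ DNFof (PComp Sg k (V+1))) :
    IFml.all V A ∈ PComp Sg (k+2) V := by
  rw [PComp]
  exact Finset.mem_union_right _ (Finset.mem_image.2 ⟨A, hA, rfl⟩)

theorem reify_mem_DNFof {C : Finset IFml} {T : Finset (Finset IFml)}
    (hT : ∀ S ∈ T, S ⊆ C ∧ S.Nonempty) : reify T ∈ DNFof C := by
  refine Finset.mem_image.2 ⟨T, ?_, rfl⟩
  refine Finset.mem_powerset.2 fun S hS => ?_
  refine Finset.mem_erase.2 ⟨?_, Finset.mem_powerset.2 (hT S hS).1⟩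
  exact Finset.nonempty_iff_ne_empty.1 (hT S hS).2

theorem DNFof_spec {Sg' : Finset Sym} {C : Finset IFml} {k V : ℕ}
    (hC : ∀ c ∈ C, ideg c ≤ k ∧ isyms c ⊆ Sg' ∧ ifree c ⊆ Finset.range V) :
    ∀ A ∈ DNFof C, ideg A ≤ k ∧ isyms A ⊆ Sg' ∧ ifree A ⊆ Finset.range V := by
  intro A hA
  obtain ⟨T, hT, rfl⟩ := Finset.mem_image.1 hA
  rw [Finset.mem_powerset] at hT
  set Q : IFml → Prop := fun c => ideg c ≤ k ∧ isyms c ⊆ Sg' ∧ ifree c ⊆ Finset.range V with hQ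
  have hconj : ∀ a b, Q a → Q b → Q (.conj a b) := by
    rintro a b ⟨h1, h2, h3⟩ ⟨h4, h5, h6⟩
    refine ⟨?_, ?_, ?_⟩
    · simp only [ideg]; omega
    · simp only [isyms]; exact Finset.union_subset h2 h5
    · simp only [ifree]; exact Finset.union_subset h3 h6
  have hdisj : ∀ a b, Q a → Q b → Q (.disj a b) := by
    rintro a b ⟨h1, h2, h3⟩ ⟨h4, h5, h6⟩
    refine ⟨?_, ?_, ?_⟩
    · simp only [ideg]; omega
    · simp only [isyms]; exact Finset.union_subset h2 h5
    · simp only [ifree]; exact Finset.union_subset h3 h6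
  have hfls : Q .fls := ⟨by simp [ideg], by simp [isyms], by simp [ifree]⟩
  show Q _
  rw [reify]
  have hmem : ∀ d ∈ T.toList.map (fun S => jconjL S.toList), Q d := by
    intro d hd
    obtain ⟨S, hS, rfl⟩ := List.mem_map.1 hd
    rw [Finset.mem_toList] at hS
    have hS' := hT hS
    rw [Finset.mem_erase, Finset.mem_powerset] at hS'
    have hne : S.toList ≠ [] := by
      rw [Ne, Finset.toList_eq_nil]
      exact hS'.1
    cases hl : S.toList with
    | nil => exact absurd hl hne
    | cons c l =>
        have hcl : ∀ e ∈ c :: l, Q e := by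
          intro e he
          refine hC e (hS'.2 (Finset.mem_toList.1 ?_))
          rw [hl]; exact he
        exact iconjGo_prop Q hconj l c (hcl c (by simp)) (fun e he => hcl e (by simp [he]))
  cases hTl : T.toList.map (fun S => jconjL S.toList) with
  | nil => exact hfls
  | cons d l =>
      have hdl : ∀ e ∈ d :: l, Q e := by
        intro e he
        refine hmem e ?_
        rw [hTl]; exact he
      exact idisjGo_prop Q hdisj l d (hdl d (by simp)) (fun e he => hdl e (by simp [he]))

theorem PComp_spec (Sg : Finset Sym) : ∀ (k V : ℕ), ∀ c ∈ PComp Sg k V,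
    ideg c ≤ k ∧ isyms c ⊆ Sg ∪ {Sym.R, Sym.E} ∧ ifree c ⊆ Finset.range V := by
  intro k
  induction k using Nat.strong_induction_on with
  | _ k ih =>
    have hatoms : ∀ (V : ℕ), ∀ c ∈ atomsF Sg V,
        ideg c ≤ 0 ∧ isyms c ⊆ Sg ∪ {Sym.R, Sym.E} ∧ ifree c ⊆ Finset.range V := by
      intro V c hc
      unfold atomsF at hc
      obtain ⟨s, hs, hc⟩ := Finset.mem_biUnion.1 hc
      match s with
      | .R => simp at hc
      | .E => simp at hc
      | .P n' m =>
          obtain ⟨a, _, rfl⟩ := Finset.mem_image.1 hc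
          refine ⟨by simp [ideg], ?_, ?_⟩
          · intro u hu
            simp only [isyms, Finset.mem_singleton] at hu
            exact Finset.mem_union_left _ (hu ▸ hs)
          · intro u hu
            simp only [ifree, Finset.mem_image, Finset.mem_univ, true_and] at hu
            obtain ⟨j, rfl⟩ := hu
            simp [(a j).isLt]
    match k with
    | 0 =>
        intro V c hc
        rw [PComp] at hc
        exact hatoms V c hc
    | 1 =>
        intro V c hc
        rw [PComp] at hc
        rcases Finset.mem_union.1 hc with hc | hc
        · rcases Finset.mem_union.1 hc with hc | hc
          · have := hatoms V c hc
            exact ⟨this.1.trans (by omega), this.2.1, this.2.2⟩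
          · obtain ⟨⟨A, B⟩, hAB, rfl⟩ := Finset.mem_image.1 hc
            rw [Finset.mem_product] at hAB
            have hA := DNFof_spec (ih 0 (by omega) V) A hAB.1
            have hB := DNFof_spec (ih 0 (by omega) V) B hAB.2
            refine ⟨by simp [ideg]; omega, ?_, ?_⟩
            · intro u hu
              simp only [isyms, Finset.mem_union, Finset.mem_singleton] at hu
              rcases hu with rfl | hu | hu
              · exact Finset.mem_union_right _ (by simp)
              · exact hA.2.1 hu
              · exact hB.2.1 hu
            · intro u hu
              simp only [ifree, Finset.mem_union] at hu
              rcases hu with hu | hu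
              · exact hA.2.2 hu
              · exact hB.2.2 hu
        · obtain ⟨A, hA', rfl⟩ := Finset.mem_image.1 hc
          have hA := DNFof_spec (ih 0 (by omega) (V+1)) A hA'
          refine ⟨by simp [ideg]; omega, ?_, ?_⟩
          · intro u hu
            simp only [isyms, Finset.mem_union, Finset.mem_singleton] at hu
            rcases hu with rfl | hu
            · exact Finset.mem_union_right _ (by simp)
            · exact hA.2.1 hu
          · intro u hu
            simp only [ifree, Finset.mem_erase] at hu
            have := hA.2.2 hu.2
            simp only [Finset.mem_range] at this ⊢
            have := hu.1
            omega
    | (k+2) =>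
        intro V c hc
        rw [PComp] at hc
        rcases Finset.mem_union.1 hc with hc | hc
        · rcases Finset.mem_union.1 hc with hc | hc
          · rcases Finset.mem_union.1 hc with hc | hc
            · have := hatoms V c hc
              exact ⟨this.1.trans (by omega), this.2.1, this.2.2⟩
            · obtain ⟨⟨A, B⟩, hAB, rfl⟩ := Finset.mem_image.1 hc
              rw [Finset.mem_product] at hAB
              have hA := DNFof_spec (ih (k+1) (by omega) V) A hAB.1
              have hB := DNFof_spec (ih (k+1) (by omega) V) B hAB.2
              refine ⟨by simp only [ideg]; omega, ?_, ?_⟩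
              · intro u hu
                simp only [isyms, Finset.mem_union, Finset.mem_singleton] at hu
                rcases hu with rfl | hu | hu
                · exact Finset.mem_union_right _ (by simp)
                · exact hA.2.1 hu
                · exact hB.2.1 hu
              · intro u hu
                simp only [ifree, Finset.mem_union] at hu
                rcases hu with hu | hu
                · exact hA.2.2 hu
                · exact hB.2.2 hu
          · obtain ⟨A, hA', rfl⟩ := Finset.mem_image.1 hc
            have hA := DNFof_spec (ih (k+1) (by omega) (V+1)) A hA'
            refine ⟨by simp only [ideg]; omega, ?_, ?_⟩
            · intro u hu
              simp only [isyms, Finset.mem_union, Finset.mem_singleton] at hu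
              rcases hu with rfl | hu
              · exact Finset.mem_union_right _ (by simp)
              · exact hA.2.1 hu
            · intro u hu
              simp only [ifree, Finset.mem_erase] at hu
              have := hA.2.2 hu.2
              simp only [Finset.mem_range] at this ⊢
              have := hu.1
              omega
        · obtain ⟨A, hA', rfl⟩ := Finset.mem_image.1 hc
          have hA := DNFof_spec (ih k (by omega) (V+1)) A hA'
          refine ⟨by simp only [ideg]; omega, ?_, ?_⟩
          · intro u hu
            simp only [isyms, Finset.mem_union, Finset.mem_singleton] at hu
            rcases hu with (rfl | rfl) | hu
            · exact Finset.mem_union_right _ (by simp)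
            · exact Finset.mem_union_right _ (by simp)
            · exact hA.2.1 hu
          · intro u hu
            simp only [ifree, Finset.mem_erase] at hu
            have := hA.2.2 hu.2
            simp only [Finset.mem_range] at this ⊢
            have := hu.1
            omega

end IPC
namespace IPC

theorem comp2_eq {D : Type} (f g : ℕ → D) (u v u' v' : ℕ)
    (h1 : f u = g u') (h2 : f v = g v') :
    (fun i0 : Fin 2 => f (![u, v] i0)) = (fun i0 : Fin 2 => g (![u', v'] i0)) := by
  funext i0
  fin_cases i0
  · simpa using h1
  · simpa using h2

theorem norm (Sg : Finset Sym) (i : IFml) : ∀ (k V : ℕ) (σ : ℕ → ℕ),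
    ideg i ≤ k → isyms i ⊆ Sg ∪ {Sym.R, Sym.E} → (∀ v ∈ ifree i, σ v < V) →
    ∃ T : Finset (Finset IFml),
      (∀ S ∈ T, S ⊆ PComp Sg k V ∧ S.Nonempty) ∧
      ∀ x : ℕ, x % 2 = 1 → ∀ (M : Model) (f g : ℕ → M.D),
        f x = g x → (∀ v ∈ ifree i, f (2*v) = g (2*σ v)) →
        ((ST i x).eval M f ↔ ∃ S ∈ T, ∀ c ∈ S, (ST c x).eval M g) := by
  induction i with
  | atom n' m args =>
      intro k V σ hdeg hsyms hfr
      have hP : Sym.P n' m ∈ Sg := by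
        have hm := hsyms (show Sym.P n' m ∈ isyms (.atom n' m args) by simp [isyms])
        rcases Finset.mem_union.1 hm with hm | hm
        · exact hm
        · simp at hm
      have hargs : ∀ j, σ (args j) < V := by
        intro j
        apply hfr
        simp only [ifree, Finset.mem_image, Finset.mem_univ, true_and]
        exact ⟨j, rfl⟩
      refine ⟨{{IFml.atom n' m fun j => σ (args j)}}, ?_, ?_⟩
      · intro S hS
        rw [Finset.mem_singleton] at hS
        subst hS
        refine ⟨?_, ⟨_, Finset.mem_singleton_self _⟩⟩
        intro c hc
        rw [Finset.mem_singleton] at hc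
        subst hc
        exact atomsF_subset_PComp Sg k V (mem_atomsF hP _ hargs)
      · intro x hx M f g hfx hfg
        have hsing : (∃ S ∈ ({{IFml.atom n' m fun j => σ (args j)}} :
              Finset (Finset IFml)), ∀ c ∈ S, (ST c x).eval M g) ↔
            (ST (IFml.atom n' m fun j => σ (args j)) x).eval M g := by simp
        rw [hsing]
        simp only [ST, Fml.eval]
        refine iff_of_eq (congrArg (M.rel (Sym.P n' m)) ?_)
        funext i0
        refine Fin.cases ?_ ?_ i0
        · exact hfx
        · intro j
          change f (2 * args j) = g (2 * σ (args j))
          apply hfg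
          simp only [ifree, Finset.mem_image, Finset.mem_univ, true_and]
          exact ⟨j, rfl⟩
  | fls =>
      intro k V σ hdeg hsyms hfr
      refine ⟨∅, by simp, ?_⟩
      intro x hx M f g hfx hfg
      simp [ST, Fml.eval]
  | conj i j ihi ihj =>
      intro k V σ hdeg hsyms hfr
      simp only [ideg] at hdeg
      obtain ⟨T₁, hT₁, he₁⟩ := ihi k V σ (by omega)
        (fun u hu => hsyms (by simp only [isyms, Finset.mem_union]; exact Or.inl hu))
        (fun v hv => hfr v (by simp only [ifree, Finset.mem_union]; exact Or.inl hv))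
      obtain ⟨T₂, hT₂, he₂⟩ := ihj k V σ (by omega)
        (fun u hu => hsyms (by simp only [isyms, Finset.mem_union]; exact Or.inr hu))
        (fun v hv => hfr v (by simp only [ifree, Finset.mem_union]; exact Or.inr hv))
      refine ⟨(T₁ ×ˢ T₂).image fun p => p.1 ∪ p.2, ?_, ?_⟩
      · intro S hS
        obtain ⟨⟨S₁, S₂⟩, hp, rfl⟩ := Finset.mem_image.1 hS
        rw [Finset.mem_product] at hp
        obtain ⟨c, hc⟩ := (hT₁ S₁ hp.1).2
        exact ⟨Finset.union_subset (hT₁ S₁ hp.1).1 (hT₂ S₂ hp.2).1,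
          ⟨c, Finset.mem_union_left _ hc⟩⟩
      · intro x hx M f g hfx hfg
        simp only [ST, Fml.eval]
        rw [he₁ x hx M f g hfx (fun v hv => hfg v (by
              simp only [ifree, Finset.mem_union]; exact Or.inl hv)),
          he₂ x hx M f g hfx (fun v hv => hfg v (by
              simp only [ifree, Finset.mem_union]; exact Or.inr hv))]
        constructor
        · rintro ⟨⟨S₁, h₁, hs₁⟩, ⟨S₂, h₂, hs₂⟩⟩
          refine ⟨S₁ ∪ S₂, Finset.mem_image.2 ⟨(S₁, S₂), Finset.mem_product.2 ⟨h₁, h₂⟩, rfl⟩, ?_⟩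
          intro c hc
          rcases Finset.mem_union.1 hc with hc | hc
          · exact hs₁ c hc
          · exact hs₂ c hc
        · rintro ⟨S, hS, hall⟩
          obtain ⟨⟨S₁, S₂⟩, hp, rfl⟩ := Finset.mem_image.1 hS
          rw [Finset.mem_product] at hp
          exact ⟨⟨S₁, hp.1, fun c hc => hall c (Finset.mem_union_left _ hc)⟩,
            ⟨S₂, hp.2, fun c hc => hall c (Finset.mem_union_right _ hc)⟩⟩
  | disj i j ihi ihj =>
      intro k V σ hdeg hsyms hfr
      simp only [ideg] at hdeg
      obtain ⟨T₁, hT₁, he₁⟩ := ihi k V σ (by omega)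
        (fun u hu => hsyms (by simp only [isyms, Finset.mem_union]; exact Or.inl hu))
        (fun v hv => hfr v (by simp only [ifree, Finset.mem_union]; exact Or.inl hv))
      obtain ⟨T₂, hT₂, he₂⟩ := ihj k V σ (by omega)
        (fun u hu => hsyms (by simp only [isyms, Finset.mem_union]; exact Or.inr hu))
        (fun v hv => hfr v (by simp only [ifree, Finset.mem_union]; exact Or.inr hv))
      refine ⟨T₁ ∪ T₂, ?_, ?_⟩
      · intro S hS
        rcases Finset.mem_union.1 hS with hS | hS
        · exact hT₁ S hS
        · exact hT₂ S hS
      · intro x hx M f g hfx hfg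
        simp only [ST, Fml.eval]
        rw [he₁ x hx M f g hfx (fun v hv => hfg v (by
              simp only [ifree, Finset.mem_union]; exact Or.inl hv)),
          he₂ x hx M f g hfx (fun v hv => hfg v (by
              simp only [ifree, Finset.mem_union]; exact Or.inr hv))]
        constructor
        · rintro (⟨S, hS, hall⟩ | ⟨S, hS, hall⟩)
          · exact ⟨S, Finset.mem_union_left _ hS, hall⟩
          · exact ⟨S, Finset.mem_union_right _ hS, hall⟩
        · rintro ⟨S, hS, hall⟩
          rcases Finset.mem_union.1 hS with hS | hS
          · exact Or.inl ⟨S, hS, hall⟩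
          · exact Or.inr ⟨S, hS, hall⟩
  | impl i j ihi ihj =>
      intro k V σ hdeg hsyms hfr
      simp only [ideg] at hdeg
      obtain ⟨k', rfl⟩ : ∃ k', k = k' + 1 := ⟨k - 1, by omega⟩
      obtain ⟨T₁, hT₁, he₁⟩ := ihi k' V σ (by omega)
        (fun u hu => hsyms (by simp only [isyms, Finset.mem_union]; exact Or.inr (Or.inl hu)))
        (fun v hv => hfr v (by simp only [ifree, Finset.mem_union]; exact Or.inl hv))
      obtain ⟨T₂, hT₂, he₂⟩ := ihj k' V σ (by omega)
        (fun u hu => hsyms (by simp only [isyms, Finset.mem_union]; exact Or.inr (Or.inr hu)))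
        (fun v hv => hfr v (by simp only [ifree, Finset.mem_union]; exact Or.inr hv))
      set A := reify T₁ with hAdef
      set B := reify T₂ with hBdef
      have hA : A ∈ DNFof (PComp Sg k' V) := reify_mem_DNFof hT₁
      have hB : B ∈ DNFof (PComp Sg k' V) := reify_mem_DNFof hT₂
      refine ⟨{{IFml.impl A B}}, ?_, ?_⟩
      · intro S hS
        rw [Finset.mem_singleton] at hS
        subst hS
        refine ⟨?_, ⟨_, Finset.mem_singleton_self _⟩⟩
        intro c hc
        rw [Finset.mem_singleton] at hc
        subst hc
        exact impl_mem_PComp hA hB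
      · intro x hx M f g hfx hfg
        have hsing : (∃ S ∈ ({{IFml.impl A B}} : Finset (Finset IFml)),
              ∀ c ∈ S, (ST c x).eval M g) ↔ (ST (IFml.impl A B) x).eval M g := by simp
        rw [hsing]
        simp only [ST, Fml.eval]
        refine forall_congr' fun d => ?_
        refine imp_congr ?_ ?_
        · exact iff_of_eq (congrArg (M.rel Sym.R)
            (comp2_eq (Function.update f (x+2) d) (Function.update g (x+2) d) x (x+2) x (x+2)
              (by rw [Function.update_of_ne (by omega : x ≠ x + 2),
                      Function.update_of_ne (by omega : x ≠ x + 2)]; exact hfx)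
              (by rw [Function.update_self, Function.update_self])))
        · have hcond : ∀ v ∈ ifree i ∪ ifree j,
              Function.update f (x+2) d (2*v) = Function.update g (x+2) d (2*σ v) := by
            intro v hv
            rw [Function.update_of_ne (by omega : 2*v ≠ x + 2),
              Function.update_of_ne (by omega : 2*σ v ≠ x + 2)]
            exact hfg v (by simpa [ifree] using hv)
          have eA : (ST i (x+2)).eval M (Function.update f (x+2) d) ↔
              (ST A (x+2)).eval M (Function.update g (x+2) d) := by
            rw [he₁ (x+2) (by omega) M _ _ (by simp)
              (fun v hv => hcond v (Finset.mem_union_left _ hv))]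
            rw [hAdef, eval_reify]
          have eB : (ST j (x+2)).eval M (Function.update f (x+2) d) ↔
              (ST B (x+2)).eval M (Function.update g (x+2) d) := by
            rw [he₂ (x+2) (by omega) M _ _ (by simp)
              (fun v hv => hcond v (Finset.mem_union_right _ hv))]
            rw [hBdef, eval_reify]
          exact imp_congr eA eB
  | all w i ihi =>
      intro k V σ hdeg hsyms hfr
      simp only [ideg] at hdeg
      obtain ⟨k'', rfl⟩ : ∃ t, k = t + 2 := ⟨k - 2, by omega⟩
      obtain ⟨T₁, hT₁, he₁⟩ := ihi k'' (V+1) (Function.update σ w V) (by omega)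
        (fun u hu => hsyms (by simp only [isyms, Finset.mem_union]; exact Or.inr hu))
        (by
          intro v hv
          by_cases hvw : v = w
          · subst hvw; rw [Function.update_self]; omega
          · rw [Function.update_of_ne hvw]
            exact Nat.lt_succ_of_lt (hfr v (Finset.mem_erase.2 ⟨hvw, hv⟩)))
      set A := reify T₁ with hAdef
      have hA : A ∈ DNFof (PComp Sg k'' (V+1)) := reify_mem_DNFof hT₁
      refine ⟨{{IFml.all V A}}, ?_, ?_⟩
      · intro S hS
        rw [Finset.mem_singleton] at hS
        subst hS
        refine ⟨?_, ⟨_, Finset.mem_singleton_self _⟩⟩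
        intro c hc
        rw [Finset.mem_singleton] at hc
        subst hc
        exact all_mem_PComp hA
      · intro x hx M f g hfx hfg
        have hsing : (∃ S ∈ ({{IFml.all V A}} : Finset (Finset IFml)),
              ∀ c ∈ S, (ST c x).eval M g) ↔ (ST (IFml.all V A) x).eval M g := by simp
        rw [hsing]
        simp only [ST, Fml.eval]
        refine forall_congr' fun d => forall_congr' fun e => ?_
        set f'' := Function.update (Function.update f (x+2) d) (2*w) e with hf''
        set g'' := Function.update (Function.update g (x+2) d) (2*V) e with hg''
        have hfx2 : f'' (x+2) = d := by
          rw [hf'', Function.update_of_ne (by omega : x + 2 ≠ 2*w), Function.update_self]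
        have hgx2 : g'' (x+2) = d := by
          rw [hg'', Function.update_of_ne (by omega : x + 2 ≠ 2*V), Function.update_self]
        have hffx : f'' x = f x := by
          rw [hf'', Function.update_of_ne (by omega : x ≠ 2*w),
            Function.update_of_ne (by omega : x ≠ x + 2)]
        have hggx : g'' x = g x := by
          rw [hg'', Function.update_of_ne (by omega : x ≠ 2*V),
            Function.update_of_ne (by omega : x ≠ x + 2)]
        refine imp_congr ?_ ?_
        · refine and_congr ?_ ?_
          · exact iff_of_eq (congrArg (M.rel Sym.R)
              (comp2_eq f'' g'' x (x+2) x (x+2) (by rw [hffx, hggx, hfx]) (by rw [hfx2, hgx2])))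
          · refine iff_of_eq (congrArg (M.rel Sym.E)
              (comp2_eq f'' g'' (x+2) (2*w) (x+2) (2*V) (by rw [hfx2, hgx2]) ?_))
            rw [hf'', hg'', Function.update_self, Function.update_self]
        · rw [he₁ (x+2) (by omega) M f'' g'' (by rw [hfx2, hgx2]) ?_]
          · rw [hAdef, eval_reify]
          · intro v hv
            by_cases hvw : v = w
            · subst hvw
              rw [Function.update_self, hf'', hg'', Function.update_self, Function.update_self]
            · have hlt : σ v < V := hfr v (Finset.mem_erase.2 ⟨hvw, hv⟩)
              rw [Function.update_of_ne hvw, hf'', hg'',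
                Function.update_of_ne (by omega : 2*v ≠ 2*w),
                Function.update_of_ne (by omega : 2*v ≠ x + 2),
                Function.update_of_ne (by omega : 2*σ v ≠ 2*V),
                Function.update_of_ne (by omega : 2*σ v ≠ x + 2)]
              exact hfg v (Finset.mem_erase.2 ⟨hvw, hv⟩)
  | ex w i ihi =>
      intro k V σ hdeg hsyms hfr
      simp only [ideg] at hdeg
      obtain ⟨k', rfl⟩ : ∃ t, k = t + 1 := ⟨k - 1, by omega⟩
      obtain ⟨T₁, hT₁, he₁⟩ := ihi k' (V+1) (Function.update σ w V) (by omega)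
        (fun u hu => hsyms (by simp only [isyms, Finset.mem_union]; exact Or.inr hu))
        (by
          intro v hv
          by_cases hvw : v = w
          · subst hvw; rw [Function.update_self]; omega
          · rw [Function.update_of_ne hvw]
            exact Nat.lt_succ_of_lt (hfr v (Finset.mem_erase.2 ⟨hvw, hv⟩)))
      set A := reify T₁ with hAdef
      have hA : A ∈ DNFof (PComp Sg k' (V+1)) := reify_mem_DNFof hT₁
      refine ⟨{{IFml.ex V A}}, ?_, ?_⟩
      · intro S hS
        rw [Finset.mem_singleton] at hS
        subst hS
        refine ⟨?_, ⟨_, Finset.mem_singleton_self _⟩⟩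
        intro c hc
        rw [Finset.mem_singleton] at hc
        subst hc
        exact ex_mem_PComp hA
      · intro x hx M f g hfx hfg
        have hsing : (∃ S ∈ ({{IFml.ex V A}} : Finset (Finset IFml)),
              ∀ c ∈ S, (ST c x).eval M g) ↔ (ST (IFml.ex V A) x).eval M g := by simp
        rw [hsing]
        simp only [ST, Fml.eval]
        refine exists_congr fun d => ?_
        set f' := Function.update f (2*w) d with hf'
        set g' := Function.update g (2*V) d with hg'
        have hffx : f' x = f x := by rw [hf', Function.update_of_ne (by omega : x ≠ 2*w)]
        have hggx : g' x = g x := by rw [hg', Function.update_of_ne (by omega : x ≠ 2*V)]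
        refine and_congr ?_ ?_
        · refine iff_of_eq (congrArg (M.rel Sym.E)
            (comp2_eq f' g' x (2*w) x (2*V) (by rw [hffx, hggx, hfx]) ?_))
          rw [hf', hg', Function.update_self, Function.update_self]
        · rw [he₁ x hx M f' g' (by rw [hffx, hggx, hfx]) ?_]
          · rw [hAdef, eval_reify]
          · intro v hv
            by_cases hvw : v = w
            · subst hvw
              rw [Function.update_self, hf', hg', Function.update_self, Function.update_self]
            · have hlt : σ v < V := hfr v (Finset.mem_erase.2 ⟨hvw, hv⟩)
              rw [Function.update_of_ne hvw, hf', hg',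
                Function.update_of_ne (by omega : 2*v ≠ 2*w),
                Function.update_of_ne (by omega : 2*σ v ≠ 2*V)]
              exact hfg v (Finset.mem_erase.2 ⟨hvw, hv⟩)

end IPC
namespace IPC

theorem eval_conjList (M : Model) (f : ℕ → M.D) :
    ∀ L : List Fml, (conjList L).eval M f ↔ ∀ ψ ∈ L, ψ.eval M f := by
  intro L
  induction L with
  | nil => simp [conjList, Fml.eval]
  | cons ψ L ih => simp [conjList, Fml.eval, ih]

theorem eval_disjList (M : Model) (f : ℕ → M.D) :
    ∀ L : List Fml, (disjList L).eval M f ↔ ∃ ψ ∈ L, ψ.eval M f := by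
  intro L
  induction L with
  | nil => simp [disjList, Fml.eval]
  | cons ψ L ih => simp [disjList, Fml.eval, ih]

noncomputable def canonF (M : Model) (a : M.D) (bs : List M.D) : ℕ → M.D :=
  fun v => if h : v % 2 = 0 ∧ v / 2 < bs.length then bs.get ⟨v/2, h.2⟩ else a

theorem canonF_one (M : Model) (a : M.D) (bs : List M.D) : canonF M a bs 1 = a := by
  simp [canonF]

theorem canonF_two (M : Model) (a : M.D) (bs : List M.D) (i : Fin bs.length) :
    canonF M a bs (2 * i.val) = bs.get i := by
  have h2 : (2 * i.val) / 2 = i.val := by omega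
  have hcond : (2 * i.val) % 2 = 0 ∧ (2 * i.val) / 2 < bs.length := ⟨by omega, by omega⟩
  simp only [canonF]
  rw [dif_pos hcond]
  exact congrArg bs.get (Fin.ext h2)

theorem sat_to_eval {M : Model} {a : M.D} {bs : List M.D} {ψ : Fml} (h : Sat M a bs ψ) :
    ψ.eval M (canonF M a bs) :=
  h _ (canonF_one M a bs) (fun i => canonF_two M a bs i)

theorem eval_to_sat {M : Model} {a : M.D} {bs : List M.D} {ψ : Fml} {n : ℕ}
    (hlen : bs.length = n) (hfo : FreeOK n ψ)
    (h : ψ.eval M (canonF M a bs)) : Sat M a bs ψ := by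
  intro f hf1 hf2
  rw [eval_congr M ψ f (canonF M a bs) ?_]
  · exact h
  · intro v hv
    rcases hfo v hv with rfl | ⟨i, hi, rfl⟩
    · rw [hf1, canonF_one]
    · have hi' : i < bs.length := by omega
      have := hf2 ⟨i, hi'⟩
      rw [this]
      exact (canonF_two M a bs ⟨i, hi'⟩).symm

end IPC

namespace IPC
theorem disjunction_of_complete_conjunctions' (φ : Fml) (n k : ℕ) (hfree : FreeOK n φ)
    (h : ∀ L L' : List Fml, CompleteConj φ n k L → CompleteConj φ n k L' →
      EntailsF (conjList L') (conjList L) →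
      ¬ (Satisfiable (.conj (conjList L) φ) ∧ Satisfiable (.conj (conjList L') (.neg φ)))) :
    (∃ Ls : List (List Fml), (∀ L ∈ Ls, CompleteConj φ n k L) ∧
      FmlEquiv φ (disjList (Ls.map conjList))) ∧
    ∃ i : IFml, FmlEquiv φ (ST i 1) := by
  classical
  set comps := PComp (sigOf φ) k n with hcomps
  have hRE : ({Sym.R, Sym.E} : Finset Sym) ⊆ sigOf φ := by
    intro s hs
    exact Finset.mem_union_right _ hs
  have hgood : ∀ c ∈ comps, GoodFml φ n k (ST c 1) := by
    intro c hc
    obtain ⟨hd, hs, hf⟩ := PComp_spec (sigOf φ) k n c hc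
    refine ⟨?_, ?_, ?_, ⟨c, rfl⟩⟩
    · rw [syms_ST]
      exact hs.trans (Finset.union_subset Finset.Subset.rfl hRE)
    · intro v hv
      have hv' := free_ST_subset c 1 (by norm_num) hv
      rcases Finset.mem_insert.1 hv' with rfl | h'
      · exact Or.inl rfl
      · obtain ⟨u, hu, rfl⟩ := Finset.mem_image.1 h'
        exact Or.inr ⟨u, by simpa using hf hu, rfl⟩
    · rw [deg_ST]; exact hd
  -- maximality of the filtered conjunction at a point
  have hmax : ∀ (M : Model) (a : M.D) (bs : List M.D), bs.length = n →
      ∀ ψ, GoodFml φ n k ψ → Sat M a bs ψ →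
        EntailsF (conjList ((comps.filter (fun c => Sat M a bs (ST c 1))).toList.map
          (fun c => ST c 1))) ψ := by
    rintro M a bs hlen ψ ⟨hsyms, hfo, hdeg, ⟨iψ, rfl⟩⟩ hsat
    have hdi : ideg iψ ≤ k := by rw [← deg_ST iψ 1]; exact hdeg
    have hsi : isyms iψ ⊆ sigOf φ ∪ {Sym.R, Sym.E} := by
      rw [← syms_ST iψ 1]
      exact hsyms.trans Finset.subset_union_left
    have hfi : ∀ v ∈ ifree iψ, id v < n := by
      intro v hv
      have hv' := mem_free_ST iψ 1 (by norm_num) v hv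
      rcases hfo _ hv' with h1 | ⟨i, hi, h2⟩
      · omega
      · simp only [id]; omega
    obtain ⟨T, hT, he⟩ := norm (sigOf φ) iψ k n id hdi hsi hfi
    have hev := sat_to_eval hsat
    rw [he 1 (by norm_num) M (canonF M a bs) (canonF M a bs) rfl (fun v _ => rfl)] at hev
    obtain ⟨S, hST, hSev⟩ := hev
    intro M' f' hf'
    rw [eval_conjList] at hf'
    rw [he 1 (by norm_num) M' f' f' rfl (fun v _ => rfl)]
    refine ⟨S, hST, fun c hc => ?_⟩
    apply hf'
    simp only [List.mem_map]
    refine ⟨c, ?_, rfl⟩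
    rw [Finset.mem_toList, Finset.mem_filter]
    refine ⟨(hT S hST).1 hc, ?_⟩
    exact eval_to_sat hlen (hgood c ((hT S hST).1 hc)).2.1 (hSev c hc)
  -- a point satisfying φ yields a complete conjunction
  have hpoint : ∀ (M : Model) (a : M.D) (bs : List M.D), bs.length = n → Sat M a bs φ →
      CompleteConj φ n k ((comps.filter (fun c => Sat M a bs (ST c 1))).toList.map
        (fun c => ST c 1)) := by
    intro M a bs hlen hφsat
    constructor
    · intro ψ hψ
      obtain ⟨c, hc, rfl⟩ := List.mem_map.1 hψ
      exact hgood c (Finset.mem_filter.1 (Finset.mem_toList.1 hc)).1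
    · refine ⟨M, a, bs, hlen, ?_, hφsat, ?_⟩
      · intro f hf1 hf2
        rw [eval_conjList]
        intro ψ hψ
        obtain ⟨c, hc, rfl⟩ := List.mem_map.1 hψ
        exact (Finset.mem_filter.1 (Finset.mem_toList.1 hc)).2 f hf1 hf2
      · intro ψ hg hs
        exact hmax M a bs hlen ψ hg hs
  -- each complete conjunction entails φ
  have hent : ∀ L, CompleteConj φ n k L → EntailsF (conjList L) φ := by
    intro L hL
    by_contra hne
    rw [EntailsF] at hne
    push_neg at hne
    obtain ⟨M', f', h1, h2⟩ := hne
    refine h L L hL hL (fun M f hf => hf) ⟨?_, ?_⟩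
    · obtain ⟨hLg, M, a, bs, hlen, hcs, hφs, hm⟩ := hL
      exact ⟨M, canonF M a bs, sat_to_eval hcs, sat_to_eval hφs⟩
    · exact ⟨M', f', h1, h2⟩
  set CS := (comps.powerset).filter
    (fun S => CompleteConj φ n k (S.toList.map (fun c => ST c 1))) with hCS
  -- forward: φ implies one of the complete conjunctions from CS
  have key : ∀ (M : Model) (f : ℕ → M.D), φ.eval M f →
      ∃ S ∈ CS, ∀ c ∈ S, (ST c 1).eval M f := by
    intro M f hφf
    have hlen : (List.ofFn (fun i : Fin n => f (2*i.val))).length = n := List.length_ofFn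
    have hmatch : ∀ i : Fin (List.ofFn (fun i : Fin n => f (2*i.val))).length,
        f (2*i.val) = (List.ofFn (fun i : Fin n => f (2*i.val))).get i := by
      intro i
      rw [List.get_ofFn]
      rfl
    set bs := List.ofFn (fun i : Fin n => f (2*i.val)) with hbs
    have hsatφ : Sat M (f 1) bs φ := by
      intro f'' h1 h2
      rw [eval_congr M φ f'' f ?_]
      · exact hφf
      · intro v hv
        rcases hfree v hv with rfl | ⟨i, hi, rfl⟩
        · exact h1
        · have hi' : i < bs.length := by omega
          exact (h2 ⟨i, hi'⟩).trans (hmatch ⟨i, hi'⟩).symm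
    refine ⟨comps.filter (fun c => Sat M (f 1) bs (ST c 1)), ?_, ?_⟩
    · rw [hCS, Finset.mem_filter]
      exact ⟨Finset.mem_powerset.2 (Finset.filter_subset _ _),
        hpoint M (f 1) bs hlen hsatφ⟩
    · intro c hc
      exact (Finset.mem_filter.1 hc).2 f rfl (fun i => hmatch i)
  -- backward: a complete conjunction from CS true at f forces φ
  have key2 : ∀ (M : Model) (f : ℕ → M.D) (S : Finset IFml), S ∈ CS →
      (∀ c ∈ S, (ST c 1).eval M f) → φ.eval M f := by
    intro M f S hS hall
    have hCC := (Finset.mem_filter.1 hS).2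
    apply hent _ hCC M f
    rw [eval_conjList]
    intro ψ hψ
    obtain ⟨c, hc, rfl⟩ := List.mem_map.1 hψ
    exact hall c (Finset.mem_toList.1 hc)
  constructor
  · refine ⟨CS.toList.map (fun S => S.toList.map (fun c => ST c 1)), ?_, ?_⟩
    · intro L hL
      obtain ⟨S, hS, rfl⟩ := List.mem_map.1 hL
      exact (Finset.mem_filter.1 (Finset.mem_toList.1 hS)).2
    · intro M f
      constructor
      · intro hφf
        obtain ⟨S, hS, hall⟩ := key M f hφf
        rw [eval_disjList]
        refine ⟨conjList (S.toList.map (fun c => ST c 1)), ?_, ?_⟩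
        · exact List.mem_map.2 ⟨S.toList.map (fun c => ST c 1),
            List.mem_map.2 ⟨S, Finset.mem_toList.2 hS, rfl⟩, rfl⟩
        · rw [eval_conjList]
          intro ψ hψ
          obtain ⟨c, hc, rfl⟩ := List.mem_map.1 hψ
          exact hall c (Finset.mem_toList.1 hc)
      · intro hd
        rw [eval_disjList] at hd
        obtain ⟨γ, hγ, hev⟩ := hd
        obtain ⟨L, hL, rfl⟩ := List.mem_map.1 hγ
        obtain ⟨S, hS, rfl⟩ := List.mem_map.1 hL
        refine key2 M f S (Finset.mem_toList.1 hS) ?_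
        intro c hc
        rw [eval_conjList] at hev
        exact hev _ (List.mem_map.2 ⟨c, Finset.mem_toList.2 hc, rfl⟩)
  · refine ⟨idisjL (CS.toList.map (fun S => jconjL S.toList)), ?_⟩
    intro M f
    rw [eval_idisjL]
    constructor
    · intro hφf
      obtain ⟨S, hS, hall⟩ := key M f hφf
      refine ⟨jconjL S.toList, List.mem_map.2 ⟨S, Finset.mem_toList.2 hS, rfl⟩, ?_⟩
      rw [eval_jconjL]
      intro c hc
      exact hall c (Finset.mem_toList.1 hc)
    · rintro ⟨d, hd, hev⟩
      obtain ⟨S, hS, rfl⟩ := List.mem_map.1 hd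
      refine key2 M f S (Finset.mem_toList.1 hS) ?_
      intro c hc
      rw [eval_jconjL] at hev
      exact hev c (Finset.mem_toList.2 hc)
end IPC
namespace IPC
/-- if no pair of complete (φ,(x,w̄ₙ),k)-conjunctions Ψ, Ψ' with
Ψ' ⊨ Ψ has both Ψ ∧ φ and Ψ' ∧ ¬φ satisfiable, then φ is equivalent to a finite
disjunction of complete conjunctions, hence to a standard translation. -/
theorem disjunction_of_complete_conjunctions (φ : Fml) (n k : ℕ) (hfree : FreeOK n φ)
    (h : ∀ L L' : List Fml, CompleteConj φ n k L → CompleteConj φ n k L' →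
      EntailsF (conjList L') (conjList L) →
      ¬ (Satisfiable (.conj (conjList L) φ) ∧ Satisfiable (.conj (conjList L') (.neg φ)))) :
    (∃ Ls : List (List Fml), (∀ L ∈ Ls, CompleteConj φ n k L) ∧
      FmlEquiv φ (disjList (Ls.map conjList))) ∧
    ∃ i : IFml, FmlEquiv φ (ST i 1) :=
  disjunction_of_complete_conjunctions' φ n k hfree h
end IPC
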